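/- Let G be a finite simple graph, s ≥ 1 an integer, σ a linear ordering of its vertices, and C an s-plex of G with |C| ≥ 2s − 1. If v is the vertex of C that appears first in σ, then C ⊆ Q_2^σ[v]. -/
import Mathlib


/-- `C` is an `s`-plex in `G`: the induced subgraph `G[C]` is connected and every
vertex `v ∈ C` is nonadjacent to at most `s - 1` vertices of `C \ {v}`. -/
def IsSPlex {V : Type*} (G : SimpleGraph V) (s : ℕ) (C : Set V) : Prop :=
  (G.induce C).Connected ∧
  ∀ v : C, {u : C | u ≠ v ∧ ¬ G.Adj (v : V) (u : V)}.ncard ≤ s - 1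

/-- The `x`-th neighborhood of `v` in `G`: vertices `u` with `1 ≤ dist_G(u,v) ≤ x`. -/
def xNbhd {V : Type*} (G : SimpleGraph V) (x : ℕ) (v : V) : Set V :=
  {u | 1 ≤ G.edist u v ∧ G.edist u v ≤ x}

/-- The set of vertices appearing at or after `v` in the ordering `σ`. -/
def laterSet {V : Type*} (σ : V → ℕ) (v : V) : Set V := {u | σ v ≤ σ u}

theorem mem_laterSet_self {V : Type*} (σ : V → ℕ) (v : V) : v ∈ laterSet σ v :=
  le_refl (σ v)

/-- `Q_x^σ[v]`: the vertex `v` together with the `x`-th neighborhood of `v` in the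
subgraph induced by `v` and the vertices appearing after `v` in the ordering `σ`. -/
def Qx {V : Type*} (G : SimpleGraph V) (σ : V → ℕ) (x : ℕ) (v : V) : Set V :=
  insert v (Subtype.val ''
    (xNbhd (G.induce (laterSet σ v)) x ⟨v, mem_laterSet_self σ v⟩))

theorem stmt_14 {V : Type*} [Fintype V] (G : SimpleGraph V) (s : ℕ) (hs : 1 ≤ s)
    (σ : V → ℕ) (hσ : Function.Injective σ)
    (C : Set V) (hC : IsSPlex G s C) (hsize : 2 * s - 1 ≤ C.ncard)
    (v : V) (hv : v ∈ C) (hfirst : ∀ u ∈ C, σ v ≤ σ u) :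
    C ⊆ Qx G σ 2 v := by
  intro u hu
  by_cases huv : u = v
  · exact Set.mem_insert_iff.mpr (Or.inl huv)
  -- u, v, and any member of C lie in laterSet σ v
  have hmem : ∀ w ∈ C, w ∈ laterSet σ v := fun w hw => hfirst w hw
  set H := G.induce (laterSet σ v) with hH
  set v' : laterSet σ v := ⟨v, mem_laterSet_self σ v⟩
  set u' : laterSet σ v := ⟨u, hmem u hu⟩
  have hne : u' ≠ v' := fun h => huv (congrArg Subtype.val h)
  have hlow : 1 ≤ H.edist u' v' := by
    rw [ENat.one_le_iff_ne_zero]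
    exact (SimpleGraph.edist_eq_zero_iff.ne.mpr hne)
  -- it suffices to show edist ≤ 2
  suffices hle : H.edist u' v' ≤ 2 by
    exact Set.mem_insert_iff.mpr (Or.inr ⟨u', ⟨hlow, hle⟩, rfl⟩)
  have hadj1 : ∀ a b : laterSet σ v, G.Adj a b → H.Adj a b := fun a b h => h
  by_cases hadj : G.Adj v u
  · have : H.edist u' v' = 1 :=
      SimpleGraph.edist_eq_one_iff_adj.mpr (hadj1 u' v' hadj.symm)
    rw [this]; exact one_le_two
  · -- counting argument: find a common neighbor w in C
    obtain ⟨hconn, hplex⟩ := hC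
    set vc : C := ⟨v, hv⟩
    set uc : C := ⟨u, hu⟩
    set S : Set C := {w : C | w ≠ vc ∧ ¬ G.Adj (vc : V) (w : V)}
    set T : Set C := {w : C | w ≠ uc ∧ ¬ G.Adj (uc : V) (w : V)}
    have hnecc : uc ≠ vc := fun h => huv (congrArg Subtype.val h)
    have huS : uc ∈ S := ⟨hnecc, hadj⟩
    have hvT : vc ∈ T := ⟨hnecc.symm, fun h => hadj h.symm⟩
    have hSfin : S.Finite := Set.toFinite S
    have hTfin : T.Finite := Set.toFinite T
    have hScard : S.ncard ≤ s - 1 := hplex vc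
    have hTcard : T.ncard ≤ s - 1 := hplex uc
    have hSpos : 1 ≤ S.ncard := Set.ncard_pos hSfin |>.mpr ⟨uc, huS⟩
    have hTpos : 1 ≤ T.ncard := Set.ncard_pos hTfin |>.mpr ⟨vc, hvT⟩
    by_contra hdist
    -- no common neighbor w: every w ≠ u,v in C is nonadjacent to v or u
    have hcover : (Set.univ \ {vc, uc} : Set C) ⊆ (S \ {uc}) ∪ (T \ {vc}) := by
      rintro w ⟨-, hw⟩
      simp only [Set.mem_insert_iff, Set.mem_singleton_iff, not_or] at hw
      obtain ⟨hwv, hwu⟩ := hw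
      by_cases h1 : G.Adj (vc : V) (w : V)
      · by_cases h2 : G.Adj (uc : V) (w : V)
        · exfalso
          apply hdist
          set w' : laterSet σ v := ⟨(w : V), hmem w w.2⟩
          calc H.edist u' v' ≤ H.edist u' w' + H.edist w' v' :=
                SimpleGraph.edist_triangle
            _ ≤ 1 + 1 := by
                gcongr
                · exact le_of_eq (SimpleGraph.edist_eq_one_iff_adj.mpr
                    (hadj1 u' w' h2))
                · exact le_of_eq (SimpleGraph.edist_eq_one_iff_adj.mpr
                    (hadj1 w' v' h1.symm))
            _ = 2 := by norm_num
        · exact Or.inr ⟨⟨hwu, h2⟩, hwv⟩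
      · exact Or.inl ⟨⟨hwv, h1⟩, hwu⟩
    have hcard1 : (Set.univ \ {vc, uc} : Set C).ncard = C.ncard - 2 := by
      rw [Set.ncard_diff (Set.subset_univ _)]
      congr 1
      · rw [Set.ncard_univ, Nat.card_coe_set_eq]
      · exact Set.ncard_pair hnecc.symm
    have hcard2 : (Set.univ \ {vc, uc} : Set C).ncard ≤
        (S \ {uc}).ncard + (T \ {vc}).ncard :=
      le_trans (Set.ncard_le_ncard hcover (Set.toFinite _)) (Set.ncard_union_le _ _)
    have hSd : (S \ {uc}).ncard = S.ncard - 1 := by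
      rw [Set.ncard_diff (Set.singleton_subset_iff.mpr huS), Set.ncard_singleton]
    have hTd : (T \ {vc}).ncard = T.ncard - 1 := by
      rw [Set.ncard_diff (Set.singleton_subset_iff.mpr hvT), Set.ncard_singleton]
    rw [hcard1, hSd, hTd] at hcard2
    omega
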